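/- In the discrete-time controlled chain setting, the operator T defined by Tf(x) := sup_{u∈U} ∫_S e^{r(x,u,y)} f(y) p(dy|x,u) maps C(S) into C(S) and is: (i) order preserving (f ≤ g implies Tf ≤ Tg) and strictly increasing (f ≤ g, f ≠ g implies Tf ≤ Tg with Tf ≠ Tg on the cone of nonnegative functions); (ii) positively 1-homogeneous (T(af) = aTf for all a > 0); (iii) strongly positive (if f ≥ 0 and f is not identically zero then Tf(x) > 0 for every x ∈ S); and (iv) compact (the image under T of any bounded subset of C(S) is relatively compact in the uniform norm). -/

import Mathlib

open MeasureTheory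
open scoped UniformConvergence

/-- **Properties of the risk-sensitive reward operator `T`.**
In the discrete-time controlled chain setting (compact metric state space `S`,
compact metric action space `U`, continuous reward `r`, Borel transition kernel
`p(dy|x,u)` with full support such that the maps
`(x,u) ↦ ∫ f dp(·|x,u)`, `‖f‖ ≤ 1`, are equicontinuous), the operator
`Tf(x) := sup_{u∈U} ∫ e^{r(x,u,y)} f(y) p(dy|x,u)` maps `C(S)` into `C(S)` and
is (i) order preserving and strictly increasing on the nonnegative cone,
(ii) positively 1-homogeneous, (iii) strongly positive, and (iv) compact. -/
theorem riskSensitive_operator_properties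
    {S U : Type*} [MetricSpace S] [CompactSpace S] [Nonempty S]
    [MeasurableSpace S] [BorelSpace S]
    [MetricSpace U] [CompactSpace U] [Nonempty U]
    (r : S → U → S → ℝ)
    (hr : Continuous fun q : S × U × S => r q.1 q.2.1 q.2.2)
    (p : S → U → Measure S)
    (hprob : ∀ x u, IsProbabilityMeasure (p x u))
    (hsupp : ∀ x u, ∀ O : Set S, IsOpen O → O.Nonempty → 0 < p x u O)
    (hequi : Equicontinuous fun (f : {f : C(S, ℝ) // ‖f‖ ≤ 1}) (xu : S × U) =>
        ∫ y, f.1 y ∂(p xu.1 xu.2)) :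
    ∃ T : C(S, ℝ) → C(S, ℝ),
      (∀ (f : C(S, ℝ)) (x : S),
          T f x = ⨆ u : U, ∫ y, Real.exp (r x u y) * f y ∂(p x u)) ∧
      -- (i) order preserving …
      (∀ f g : C(S, ℝ), f ≤ g → T f ≤ T g) ∧
      -- … and strictly increasing on the cone of nonnegative functions
      (∀ f g : C(S, ℝ), 0 ≤ f → f ≤ g → f ≠ g → T f ≤ T g ∧ T f ≠ T g) ∧
      -- (ii) positively 1-homogeneous
      (∀ (a : ℝ), 0 < a → ∀ f : C(S, ℝ), T (a • f) = a • T f) ∧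
      -- (iii) strongly positive
      (∀ f : C(S, ℝ), 0 ≤ f → f ≠ 0 → ∀ x, 0 < T f x) ∧
      -- (iv) compact
      (∀ B : Set C(S, ℝ), Bornology.IsBounded B →
        IsCompact (closure (T '' B))) := by
  classical
  set E : S × U × S → ℝ := fun q => Real.exp (r q.1 q.2.1 q.2.2) with hE_def
  have hEc : Continuous E := Real.continuous_exp.comp hr
  have hEpos : ∀ q, 0 < E q := fun q => Real.exp_pos _
  obtain ⟨qm, -, hqm⟩ := isCompact_univ.exists_isMaxOn
    Set.univ_nonempty hEc.continuousOn
  set Mb := E qm with hMb_def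
  have hMb : ∀ q, E q ≤ Mb := fun q => hqm (Set.mem_univ q)
  have hMbpos : 0 < Mb := hEpos qm
  -- continuity of integrands
  have hcontI : ∀ (f : C(S, ℝ)) (x : S) (u : U),
      Continuous fun y => E (x, u, y) * f y :=
    fun f x u => (hEc.comp (continuous_const.prodMk
      (continuous_const.prodMk continuous_id))).mul f.continuous
  have hint : ∀ (f : C(S, ℝ)) (x : S) (u : U),
      Integrable (fun y => E (x, u, y) * f y) (p x u) := by
    intro f x u
    haveI := hprob x u
    exact (hcontI f x u).integrable_of_hasCompactSupport
      (HasCompactSupport.of_compactSpace _)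
  -- the pre-sup operator
  set F : C(S, ℝ) → S × U → ℝ :=
    fun f q => ∫ y, E (q.1, q.2, y) * f y ∂(p q.1 q.2) with hF_def
  have hFbound : ∀ (f : C(S, ℝ)) (q : S × U), |F f q| ≤ Mb * ‖f‖ := by
    intro f q
    haveI := hprob q.1 q.2
    have h := norm_integral_le_of_norm_le_const (μ := p q.1 q.2)
      (f := fun y => E (q.1, q.2, y) * f y) (C := Mb * ‖f‖) ?_
    · simpa using h
    · filter_upwards with y
      rw [Real.norm_eq_abs, abs_mul, abs_of_pos (hEpos _)]
      exact mul_le_mul (hMb _) (f.norm_coe_le_norm y) (abs_nonneg _) hMbpos.le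
  have hbdd : ∀ (f : C(S, ℝ)) (x : S), BddAbove (Set.range fun u => F f (x, u)) := by
    intro f x
    refine ⟨Mb * ‖f‖, ?_⟩
    rintro - ⟨u, rfl⟩
    exact (abs_le.mp (hFbound f (x, u))).2
  -- key uniform estimate
  have hkey : ∀ M : ℝ, 0 < M → ∀ ε : ℝ, 0 < ε → ∃ δ > 0, ∀ q q' : S × U,
      dist q q' < δ → ∀ f : C(S, ℝ), ‖f‖ ≤ M → |F f q - F f q'| ≤ ε := by
    intro M hM ε hε
    have hUE := Metric.uniformEquicontinuous_iff.mp
      (CompactSpace.uniformEquicontinuous_of_equicontinuous hequi)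
    obtain ⟨δ₁, hδ₁, hUE⟩ := hUE (ε / (2 * Mb * M))
      (by positivity)
    have hEuc := Metric.uniformContinuous_iff.mp
      (CompactSpace.uniformContinuous_of_continuous hEc)
    obtain ⟨δ₂, hδ₂, hEuc⟩ := hEuc (ε / (2 * M)) (by positivity)
    refine ⟨min δ₁ δ₂, lt_min hδ₁ hδ₂, ?_⟩
    intro q q' hqq f hf
    haveI := hprob q.1 q.2
    haveI := hprob q'.1 q'.2
    -- first term
    have hT1 : |(∫ y, E (q.1, q.2, y) * f y ∂(p q.1 q.2)) -
        ∫ y, E (q'.1, q'.2, y) * f y ∂(p q.1 q.2)| ≤ ε / 2 := by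
      rw [← integral_sub (hint f q.1 q.2) ?_]
      swap
      · exact ((hEc.comp (continuous_const.prodMk
          (continuous_const.prodMk continuous_id))).mul
            f.continuous).integrable_of_hasCompactSupport
          (HasCompactSupport.of_compactSpace _)
      have h := norm_integral_le_of_norm_le_const (μ := p q.1 q.2)
        (f := fun y => E (q.1, q.2, y) * f y - E (q'.1, q'.2, y) * f y)
        (C := ε / (2 * M) * M) (Filter.Eventually.of_forall ?_)
      · rw [Real.norm_eq_abs] at h
        calc _ ≤ ε / (2 * M) * M * ((p q.1 q.2) Set.univ).toReal := h
        _ = ε / 2 := by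
            simp only [measure_univ, ENNReal.toReal_one, mul_one]
            field_simp
      · intro y
        have hd : dist ((q.1, q.2, y) : S × U × S) (q'.1, q'.2, y) < δ₂ := by
          have : dist ((q.1, q.2, y) : S × U × S) (q'.1, q'.2, y) = dist q q' := by
            simp [Prod.dist_eq, dist_self, max_eq_left dist_nonneg]
          rw [this]
          exact hqq.trans_le (min_le_right _ _)
        have hE2 := hEuc hd
        rw [Real.dist_eq] at hE2
        simp only [Real.norm_eq_abs]
        rw [show E (q.1, q.2, y) * f y - E (q'.1, q'.2, y) * f y =
          (E (q.1, q.2, y) - E (q'.1, q'.2, y)) * f y from by ring, abs_mul]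
        exact mul_le_mul hE2.le ((f.norm_coe_le_norm y).trans hf) (abs_nonneg _)
          (by positivity)
    -- second term
    have hT2 : |(∫ y, E (q'.1, q'.2, y) * f y ∂(p q.1 q.2)) -
        ∫ y, E (q'.1, q'.2, y) * f y ∂(p q'.1 q'.2)| ≤ ε / 2 := by
      set g : C(S, ℝ) := (Mb * M)⁻¹ • ⟨fun y => E (q'.1, q'.2, y) * f y,
        (hEc.comp (continuous_const.prodMk
          (continuous_const.prodMk continuous_id))).mul f.continuous⟩ with hg_def
      have hg1 : ‖g‖ ≤ 1 := by
        rw [ContinuousMap.norm_le _ zero_le_one]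
        intro y
        have hb : |E (q'.1, q'.2, y) * f y| ≤ Mb * M := by
          rw [abs_mul, abs_of_pos (hEpos _)]
          exact mul_le_mul (hMb _) ((f.norm_coe_le_norm y).trans hf)
            (abs_nonneg _) hMbpos.le
        have heq : ‖g y‖ = (Mb * M)⁻¹ * |E (q'.1, q'.2, y) * f y| := by
          rw [hg_def]
          simp only [ContinuousMap.smul_apply, ContinuousMap.coe_mk, smul_eq_mul,
            Real.norm_eq_abs, abs_mul]
          rw [abs_of_nonneg (by positivity : (0:ℝ) ≤ (Mb * M)⁻¹)]
        rw [heq, inv_mul_le_iff₀ (by positivity), mul_one]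
        exact hb
      have h := hUE q q' (hqq.trans_le (min_le_left _ _)) ⟨g, hg1⟩
      rw [Real.dist_eq] at h
      have hgi : ∀ x u, (∫ y, g y ∂(p x u)) =
          (Mb * M)⁻¹ * ∫ y, E (q'.1, q'.2, y) * f y ∂(p x u) := by
        intro x u
        rw [hg_def]
        simp only [ContinuousMap.smul_apply, ContinuousMap.coe_mk, smul_eq_mul]
        exact integral_const_mul _ _
      simp only [hgi] at h
      rw [← mul_sub, abs_mul, abs_of_nonneg (by positivity : (0:ℝ) ≤ (Mb * M)⁻¹)]
        at h
      have h2 := mul_lt_mul_of_pos_left h (by positivity : (0:ℝ) < Mb * M)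
      rw [← mul_assoc, mul_inv_cancel₀ (by positivity : (Mb * M) ≠ 0), one_mul] at h2
      calc |(∫ y, E (q'.1, q'.2, y) * f y ∂(p q.1 q.2)) -
            ∫ y, E (q'.1, q'.2, y) * f y ∂(p q'.1 q'.2)| ≤
          Mb * M * (ε / (2 * Mb * M)) := h2.le
        _ = ε / 2 := by field_simp
    calc |F f q - F f q'| ≤ _ + _ := abs_sub_le _ (∫ y, E (q'.1, q'.2, y) * f y ∂(p q.1 q.2)) _
      _ ≤ ε / 2 + ε / 2 := add_le_add hT1 hT2
      _ = ε := by ring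
  -- sup difference
  have hsup_diff : ∀ (a b : U → ℝ), BddAbove (Set.range a) → BddAbove (Set.range b) →
      ∀ ε : ℝ, (∀ u, |a u - b u| ≤ ε) → |(⨆ u, a u) - ⨆ u, b u| ≤ ε := by
    intro a b ha hb ε h
    rw [abs_le]
    constructor
    · have : ∀ u, b u ≤ (⨆ u, a u) + ε := fun u => by
        have := (abs_le.mp (h u)).1
        have h2 := le_ciSup ha u
        linarith
      have := ciSup_le this
      linarith
    · have : ∀ u, a u ≤ (⨆ u, b u) + ε := fun u => by
        have := (abs_le.mp (h u)).2
        have h2 := le_ciSup hb u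
        linarith
      have := ciSup_le this
      linarith
  -- continuity of F f
  have hFcont : ∀ f : C(S, ℝ), Continuous (F f) := by
    intro f
    rw [Metric.continuous_iff]
    intro q ε hε
    obtain ⟨δ, hδ, hk⟩ := hkey (‖f‖ + 1) (by positivity) (ε / 2) (by positivity)
    exact ⟨δ, hδ, fun q' hq' => by
      rw [Real.dist_eq]
      exact lt_of_le_of_lt (hk q' q hq' f (by linarith [norm_nonneg f]))
        (by linarith)⟩
  -- continuity of T f
  have hTcont : ∀ f : C(S, ℝ), Continuous fun x => ⨆ u, F f (x, u) := by
    intro f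
    rw [Metric.continuous_iff]
    intro x ε hε
    obtain ⟨δ, hδ, hk⟩ := hkey (‖f‖ + 1) (by positivity) (ε / 2) (by positivity)
    refine ⟨δ, hδ, fun x' hx' => ?_⟩
    rw [Real.dist_eq]
    refine lt_of_le_of_lt (hsup_diff _ _ (hbdd f x') (hbdd f x) (ε / 2)
      fun u => ?_) (by linarith)
    refine hk (x', u) (x, u) ?_ f (by linarith [norm_nonneg f])
    calc dist ((x', u) : S × U) (x, u) = dist x' x := by
          simp [Prod.dist_eq, dist_self, max_eq_left dist_nonneg]
      _ < δ := hx'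
  set T : C(S, ℝ) → C(S, ℝ) := fun f => ⟨fun x => ⨆ u, F f (x, u), hTcont f⟩
    with hT_def
  have hTspec : ∀ (f : C(S, ℝ)) (x : S),
      T f x = ⨆ u : U, ∫ y, Real.exp (r x u y) * f y ∂(p x u) := fun f x => rfl
  -- monotonicity of F
  have hFmono : ∀ f g : C(S, ℝ), f ≤ g → ∀ q : S × U, F f q ≤ F g q := by
    intro f g h q
    refine integral_mono (hint f q.1 q.2) (hint g q.1 q.2) fun y => ?_
    exact mul_le_mul_of_nonneg_left (ContinuousMap.le_def.mp h y) (hEpos _).le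
  have hTmono : ∀ f g : C(S, ℝ), f ≤ g → T f ≤ T g := by
    intro f g h
    rw [ContinuousMap.le_def]
    intro x
    exact ciSup_mono (hbdd g x) fun u => hFmono f g h (x, u)
  -- strict pointwise inequality
  have hFstrict : ∀ f g : C(S, ℝ), f ≤ g → (∃ y, f y < g y) →
      ∀ q : S × U, F f q < F g q := by
    rintro f g hle ⟨y0, hy0⟩ q
    haveI := hprob q.1 q.2
    have hpos : 0 < ∫ y, E (q.1, q.2, y) * (g y - f y) ∂(p q.1 q.2) := by
      rw [integral_pos_iff_support_of_nonneg]
      · refine lt_of_lt_of_le (hsupp q.1 q.2 {y | f y < g y}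
          (isOpen_lt f.continuous g.continuous) ⟨y0, hy0⟩) (measure_mono ?_)
        intro y hy
        exact ne_of_gt (mul_pos (hEpos _) (sub_pos.mpr hy))
      · intro y
        exact mul_nonneg (hEpos _).le (sub_nonneg.mpr (ContinuousMap.le_def.mp hle y))
      · exact ((hEc.comp (continuous_const.prodMk
          (continuous_const.prodMk continuous_id))).mul
            (g.continuous.sub f.continuous)).integrable_of_hasCompactSupport
          (HasCompactSupport.of_compactSpace _)
    have heq : (∫ y, E (q.1, q.2, y) * (g y - f y) ∂(p q.1 q.2)) = F g q - F f q := by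
      simp_rw [mul_sub]
      exact integral_sub (hint g q.1 q.2) (hint f q.1 q.2)
    rw [heq] at hpos
    linarith
  -- strictness of T
  have hTne : ∀ f g : C(S, ℝ), f ≤ g → f ≠ g → T f ≠ T g := by
    intro f g hle hne
    have hex : ∃ y, f y < g y := by
      by_contra hc
      push_neg at hc
      exact hne (ContinuousMap.ext fun y =>
        le_antisymm (ContinuousMap.le_def.mp hle y) (hc y))
    inhabit S
    set x : S := default
    have hcu : Continuous fun u : U => F f (x, u) :=
      (hFcont f).comp (Continuous.prodMk_right x)
    obtain ⟨u0, -, hu0⟩ := isCompact_univ.exists_isMaxOn Set.univ_nonempty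
      hcu.continuousOn
    have h1 : T f x ≤ F f (x, u0) := ciSup_le fun u => hu0 (Set.mem_univ u)
    have h2 : F f (x, u0) < F g (x, u0) := hFstrict f g hle hex (x, u0)
    have h3 : F g (x, u0) ≤ T g x := le_ciSup (hbdd g x) u0
    intro hTeq
    have := DFunLike.congr_fun hTeq x
    have : T f x = T g x := by rw [hTeq]
    linarith
  -- homogeneity
  have hThom : ∀ a : ℝ, 0 < a → ∀ f : C(S, ℝ), T (a • f) = a • T f := by
    intro a ha f
    ext x
    have hFa : ∀ q : S × U, F (a • f) q = a * F f q := by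
      intro q
      rw [hF_def]
      simp only [ContinuousMap.coe_smul, Pi.smul_apply, smul_eq_mul]
      rw [← integral_const_mul]
      congr 1
      ext y
      ring
    calc T (a • f) x = ⨆ u, F (a • f) (x, u) := rfl
      _ = ⨆ u, a * F f (x, u) := by simp_rw [hFa]
      _ = a * ⨆ u, F f (x, u) := (Real.mul_iSup_of_nonneg ha.le _).symm
      _ = (a • T f) x := rfl
  -- strong positivity
  have hTpos : ∀ f : C(S, ℝ), 0 ≤ f → f ≠ 0 → ∀ x, 0 < T f x := by
    intro f hf hne x
    have hex : ∃ y, (0 : C(S, ℝ)) y < f y := by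
      by_contra hc
      push_neg at hc
      exact hne (ContinuousMap.ext fun y =>
        le_antisymm (hc y) (ContinuousMap.le_def.mp hf y))
    have hzero : ∀ u, F (0 : C(S, ℝ)) (x, u) = 0 := by
      intro u
      rw [hF_def]
      simp
    inhabit U
    have h1 : F (0 : C(S, ℝ)) (x, default) < F f (x, default) :=
      hFstrict 0 f hf hex (x, default)
    rw [hzero] at h1
    exact lt_of_lt_of_le h1 (le_ciSup (hbdd f x) default)
  -- compactness
  have hTcompact : ∀ B : Set C(S, ℝ), Bornology.IsBounded B →
      IsCompact (closure (T '' B)) := by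
    intro B hB
    obtain ⟨M0, hM0⟩ := hB.exists_norm_le
    set M : ℝ := max M0 1 with hM_def
    have hM : ∀ f ∈ B, ‖f‖ ≤ M := fun f hf => (hM0 f hf).trans (le_max_left _ _)
    have hMpos : (0:ℝ) < M := lt_of_lt_of_le one_pos (le_max_right _ _)
    -- equicontinuity of the image family
    have heqc : Equicontinuous (fun (i : ↥(T '' B)) => ⇑(i : C(S, ℝ))) := by
      intro x
      rw [Metric.equicontinuousAt_iff]
      intro ε hε
      obtain ⟨δ, hδ, hk⟩ := hkey M hMpos (ε / 2) (by positivity)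
      refine ⟨δ, hδ, fun x' hx' i => ?_⟩
      obtain ⟨f, hfB, hfi⟩ := i.2
      have hall : ∀ u : U, |F f (x, u) - F f (x', u)| ≤ ε / 2 := by
        intro u
        refine hk (x, u) (x', u) ?_ f (hM f hfB)
        calc dist ((x, u) : S × U) (x', u) = dist x x' := by
              simp [Prod.dist_eq, dist_self, max_eq_left dist_nonneg]
          _ < δ := by rw [dist_comm]; exact hx'
      have hd := hsup_diff _ _ (hbdd f x) (hbdd f x') (ε / 2) hall
      have hix : ∀ z : S, (i : C(S, ℝ)) z = ⨆ u, F f (z, u) := by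
        intro z
        rw [← hfi]
        rfl
      rw [Real.dist_eq, hix x, hix x']
      exact lt_of_le_of_lt hd (by linarith)
    haveI : T2Space (S →ᵤ[{K : Set S | IsCompact K}] ℝ) :=
      UniformOnFun.t2Space_of_covering (by
        apply Set.eq_univ_of_forall
        intro x
        exact Set.mem_sUnion.mpr ⟨{x}, isCompact_singleton, rfl⟩)
    refine ArzelaAscoli.isCompact_closure_of_isClosedEmbedding
      (F := (DFunLike.coe : C(S, ℝ) → S → ℝ)) (fun K hK => hK)
      ContinuousMap.isUniformEmbedding_toUniformOnFunIsCompact.isClosedEmbedding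
      (fun K _ => heqc.equicontinuousOn K)
      (fun K _ x _ => ⟨Set.Icc (-(Mb * M)) (Mb * M), isCompact_Icc, ?_⟩)
    intro i hi
    obtain ⟨f, hfB, hfi⟩ := hi
    have hb : ∀ u : U, |F f (x, u)| ≤ Mb * M := fun u =>
      (hFbound f (x, u)).trans (mul_le_mul_of_nonneg_left (hM f hfB) hMbpos.le)
    rw [← hfi]
    have hub : T f x ≤ Mb * M := ciSup_le fun u => (abs_le.mp (hb u)).2
    inhabit U
    have hlb : -(Mb * M) ≤ T f x :=
      le_trans (abs_le.mp (hb default)).1 (le_ciSup (hbdd f x) default)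
    exact ⟨hlb, hub⟩
  exact ⟨T, hTspec, hTmono,
    fun f g h0 hle hne => ⟨hTmono f g hle, hTne f g hle hne⟩,
    hThom, hTpos, hTcompact⟩
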